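/- There is a ℂ-algebra homomorphism π : H →ₐ[ℂ] MvPolynomial (Fin n ⊕ Fin n) ℂ with π (x i) = X (Sum.inl i), π (p i) = X (Sum.inr i) and π ƛ = 0; moreover π is surjective and its kernel is exactly the two-sided ideal of H generated by ƛ, i.e. for all h ∈ H, π h = 0 ↔ h ∈ TwoSidedIdeal.span {ƛ}. (Property (2) of the canonical family in Section 5.2: the fiber of Q_{𝔸¹}Ω_{𝔸ⁿ} over λ = 0 is the commutative scheme Ω_{𝔸ⁿ}, i.e. H/(ƛ) is the polynomial ring in 2n variables.) -/

import Mathlib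

/-- The generator `Xᵢ` of the free algebra `F = FreeAlgebra ℂ ((Fin n ⊕ Fin n) ⊕ Unit)`. -/
noncomputable def fwX (n : ℕ) (i : Fin n) : FreeAlgebra ℂ ((Fin n ⊕ Fin n) ⊕ Unit) :=
  FreeAlgebra.ι ℂ (Sum.inl (Sum.inl i))

/-- The generator `Pᵢ` of the free algebra `F`. -/
noncomputable def fwP (n : ℕ) (i : Fin n) : FreeAlgebra ℂ ((Fin n ⊕ Fin n) ⊕ Unit) :=
  FreeAlgebra.ι ℂ (Sum.inl (Sum.inr i))

/-- The generator `Λ` of the free algebra `F`. -/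
noncomputable def fwL (n : ℕ) : FreeAlgebra ℂ ((Fin n ⊕ Fin n) ⊕ Unit) :=
  FreeAlgebra.ι ℂ (Sum.inr Unit.unit)

/-- The defining relations of the homogenized Weyl algebra (the coordinate ring of
the canonical family `Q_{𝔸¹}Ω_{𝔸ⁿ}` of deformation quantizations of the cotangent
bundle of `𝔸ⁿ`, Section 5.2):
`[xᵢ,xⱼ] = 0`, `[pᵢ,pⱼ] = 0`, `[ƛ,xᵢ] = 0`, `[ƛ,pᵢ] = 0`,
`[pᵢ,xⱼ] = δᵢⱼ ƛ`. -/
inductive WeylRel (n : ℕ) :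
    FreeAlgebra ℂ ((Fin n ⊕ Fin n) ⊕ Unit) →
    FreeAlgebra ℂ ((Fin n ⊕ Fin n) ⊕ Unit) → Prop
  | xx (i j : Fin n) : WeylRel n (fwX n i * fwX n j) (fwX n j * fwX n i)
  | pp (i j : Fin n) : WeylRel n (fwP n i * fwP n j) (fwP n j * fwP n i)
  | lx (i : Fin n) : WeylRel n (fwL n * fwX n i) (fwX n i * fwL n)
  | lp (i : Fin n) : WeylRel n (fwL n * fwP n i) (fwP n i * fwL n)
  | px_same (i : Fin n) : WeylRel n (fwP n i * fwX n i) (fwX n i * fwP n i + fwL n)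
  | px_ne (i j : Fin n) : i ≠ j → WeylRel n (fwP n i * fwX n j) (fwX n j * fwP n i)

/-- The homogenized Weyl algebra `H`. -/
noncomputable abbrev HWeyl (n : ℕ) := RingQuot (WeylRel n)

/-- The element `x i` of `H`. -/
noncomputable def hx (n : ℕ) (i : Fin n) : HWeyl n :=
  RingQuot.mkAlgHom ℂ (WeylRel n) (fwX n i)

/-- The element `p i` of `H`. -/
noncomputable def hp (n : ℕ) (i : Fin n) : HWeyl n :=
  RingQuot.mkAlgHom ℂ (WeylRel n) (fwP n i)

/-- The central element `ƛ` of `H`. -/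
noncomputable def hl (n : ℕ) : HWeyl n :=
  RingQuot.mkAlgHom ℂ (WeylRel n) (fwL n)

/-- auxiliary lift -/
noncomputable def wlift (n : ℕ) :
    FreeAlgebra ℂ ((Fin n ⊕ Fin n) ⊕ Unit) →ₐ[ℂ] MvPolynomial (Fin n ⊕ Fin n) ℂ :=
  FreeAlgebra.lift ℂ (Sum.elim MvPolynomial.X (fun _ => 0))

lemma wlift_rel (n : ℕ) : ∀ ⦃a b⦄, WeylRel n a b → wlift n a = wlift n b := by
  intro a b h
  induction h with
  | xx i j => simp [wlift, fwX, mul_comm]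
  | pp i j => simp [wlift, fwP, mul_comm]
  | lx i => simp [wlift, fwX, fwL]
  | lp i => simp [wlift, fwP, fwL]
  | px_same i => simp [wlift, fwX, fwP, fwL, mul_comm]
  | px_ne i j h => simp [wlift, fwX, fwP, mul_comm]

/-- Property (2) of the canonical family `Q_{𝔸¹}Ω_{𝔸ⁿ}` (Section 5.2): there is a
`ℂ`-algebra homomorphism `π : H → ℂ[x₁,…,xₙ,p₁,…,pₙ]` with `π(x i) = X (inl i)`,
`π(p i) = X (inr i)` and `π(ƛ) = 0`; it is surjective with kernel exactly the
two-sided ideal generated by `ƛ`.  In other words, the fiber of the family over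
`λ = 0` is the commutative scheme `Ω_{𝔸ⁿ}`. -/
theorem stmt_12 (n : ℕ) (hn : 0 < n) :
    ∃ π : HWeyl n →ₐ[ℂ] MvPolynomial (Fin n ⊕ Fin n) ℂ,
      (∀ i : Fin n, π (hx n i) = MvPolynomial.X (Sum.inl i)) ∧
      (∀ i : Fin n, π (hp n i) = MvPolynomial.X (Sum.inr i)) ∧
      π (hl n) = 0 ∧
      Function.Surjective π ∧
      ∀ h : HWeyl n, π h = 0 ↔ h ∈ TwoSidedIdeal.span {hl n} := by
  classical
  set π : HWeyl n →ₐ[ℂ] MvPolynomial (Fin n ⊕ Fin n) ℂ :=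
    RingQuot.liftAlgHom ℂ ⟨wlift n, wlift_rel n⟩ with hπdef
  have hπx : ∀ i : Fin n, π (hx n i) = MvPolynomial.X (Sum.inl i) := by
    intro i
    rw [hπdef, hx, RingQuot.liftAlgHom_mkAlgHom_apply]
    simp [wlift, fwX]
  have hπp : ∀ i : Fin n, π (hp n i) = MvPolynomial.X (Sum.inr i) := by
    intro i
    rw [hπdef, hp, RingQuot.liftAlgHom_mkAlgHom_apply]
    simp [wlift, fwP]
  have hπl : π (hl n) = 0 := by
    rw [hπdef, hl, RingQuot.liftAlgHom_mkAlgHom_apply]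
    simp [wlift, fwL]
  have hsurj : Function.Surjective π := by
    rw [← AlgHom.range_eq_top, eq_top_iff, ← MvPolynomial.adjoin_range_X]
    apply Algebra.adjoin_le
    rintro _ ⟨v, rfl⟩
    cases v with
    | inl i => exact ⟨hx n i, hπx i⟩
    | inr i => exact ⟨hp n i, hπp i⟩
  refine ⟨π, hπx, hπp, hπl, hsurj, fun h => ⟨?_, ?_⟩⟩
  · -- hard direction
    intro hh
    set I := TwoSidedIdeal.span {hl n} with hI
    set mk : HWeyl n →+* I.ringCon.Quotient := I.ringCon.mk' with hmk
    have hsur : Function.Surjective mk := fun q => Quot.inductionOn q (fun a => ⟨a, rfl⟩)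
    have hker : ∀ a : HWeyl n, mk a = 0 ↔ a ∈ I := by
      intro a
      rw [← TwoSidedIdeal.mem_ker mk, hmk, TwoSidedIdeal.ker_ringCon_mk']
    have hl0 : mk (hl n) = 0 := (hker _).mpr (TwoSidedIdeal.subset_span rfl)
    -- relations in H
    have hrel : ∀ {a b}, WeylRel n a b →
        RingQuot.mkAlgHom ℂ (WeylRel n) a = RingQuot.mkAlgHom ℂ (WeylRel n) b :=
      fun h => RingQuot.mkAlgHom_rel ℂ h
    have e1 : ∀ i j, hx n i * hx n j = hx n j * hx n i := fun i j => by
      simpa only [hx, map_mul] using hrel (WeylRel.xx i j)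
    have e2 : ∀ i j, hp n i * hp n j = hp n j * hp n i := fun i j => by
      simpa only [hp, map_mul] using hrel (WeylRel.pp i j)
    have e5 : ∀ i, hp n i * hx n i = hx n i * hp n i + hl n := fun i => by
      simpa only [hp, hx, hl, map_mul, map_add] using hrel (WeylRel.px_same i)
    have e6 : ∀ i j, i ≠ j → hp n i * hx n j = hx n j * hp n i := fun i j hij => by
      simpa only [hp, hx, map_mul] using hrel (WeylRel.px_ne i j hij)
    have epx : ∀ i j, mk (hp n i * hx n j) = mk (hx n j * hp n i) := by
      intro i j
      by_cases hij : i = j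
      · subst hij; rw [e5, map_add, hl0, add_zero]
      · rw [e6 i j hij]
    -- commutation of generator images in the quotient
    have hcomm : ∀ v w : (Fin n ⊕ Fin n) ⊕ Unit,
        Commute (mk (RingQuot.mkAlgHom ℂ (WeylRel n) (FreeAlgebra.ι ℂ v)))
          (mk (RingQuot.mkAlgHom ℂ (WeylRel n) (FreeAlgebra.ι ℂ w))) := by
      have hlz : mk (hl n) = 0 := hl0
      rintro ((i | i) | _) ((j | j) | _)
      · show mk (hx n i) * mk (hx n j) = mk (hx n j) * mk (hx n i)
        rw [← map_mul, ← map_mul, e1]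
      · show mk (hx n i) * mk (hp n j) = mk (hp n j) * mk (hx n i)
        rw [← map_mul, ← map_mul, epx]
      · show mk (hx n i) * mk (hl n) = mk (hl n) * mk (hx n i)
        rw [hlz, mul_zero, zero_mul]
      · show mk (hp n i) * mk (hx n j) = mk (hx n j) * mk (hp n i)
        rw [← map_mul, ← map_mul, epx]
      · show mk (hp n i) * mk (hp n j) = mk (hp n j) * mk (hp n i)
        rw [← map_mul, ← map_mul, e2]
      · show mk (hp n i) * mk (hl n) = mk (hl n) * mk (hp n i)
        rw [hlz, mul_zero, zero_mul]
      · show mk (hl n) * mk (hx n j) = mk (hx n j) * mk (hl n)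
        rw [hlz, mul_zero, zero_mul]
      · show mk (hl n) * mk (hp n j) = mk (hp n j) * mk (hl n)
        rw [hlz, mul_zero, zero_mul]
      · exact Commute.refl _
    set F : FreeAlgebra ℂ ((Fin n ⊕ Fin n) ⊕ Unit) → I.ringCon.Quotient :=
      fun f => mk (RingQuot.mkAlgHom ℂ (WeylRel n) f) with hF
    have hFsur : Function.Surjective F :=
      hsur.comp (RingQuot.mkAlgHom_surjective ℂ (WeylRel n))
    have hc0 : ∀ (r : ℂ) (b : I.ringCon.Quotient),
        Commute (mk (algebraMap ℂ (HWeyl n) r)) b := by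
      intro r b
      obtain ⟨a, rfl⟩ := hsur b
      show mk _ * mk _ = mk _ * mk _
      rw [← map_mul, ← map_mul, Algebra.commutes]
    have hcι : ∀ (v : (Fin n ⊕ Fin n) ⊕ Unit) (b : I.ringCon.Quotient),
        Commute (F (FreeAlgebra.ι ℂ v)) b := by
      intro v b
      obtain ⟨w, rfl⟩ := hFsur b
      induction w using FreeAlgebra.induction with
      | grade0 r =>
        have : F (algebraMap ℂ _ r) = mk (algebraMap ℂ (HWeyl n) r) := by
          simp [hF, AlgHom.commutes]
        rw [this]
        exact (hc0 r _).symm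
      | grade1 w => exact hcomm v w
      | mul a b ha hb =>
        have : F (a * b) = F a * F b := by simp [hF, map_mul]
        rw [this]
        exact ha.mul_right hb
      | add a b ha hb =>
        have : F (a + b) = F a + F b := by simp [hF, map_add]
        rw [this]
        exact ha.add_right hb
    have key : ∀ (u : FreeAlgebra ℂ ((Fin n ⊕ Fin n) ⊕ Unit)) (b : I.ringCon.Quotient),
        Commute (F u) b := by
      intro u
      induction u using FreeAlgebra.induction with
      | grade0 r =>
        intro b
        have : F (algebraMap ℂ _ r) = mk (algebraMap ℂ (HWeyl n) r) := by
          simp [hF, AlgHom.commutes]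
        rw [this]
        exact hc0 r b
      | grade1 v => exact hcι v
      | mul a b ha hb =>
        intro c
        have : F (a * b) = F a * F b := by simp [hF, map_mul]
        rw [this]
        exact (ha c).mul_left (hb c)
      | add a b ha hb =>
        intro c
        have : F (a + b) = F a + F b := by simp [hF, map_add]
        rw [this]
        exact (ha c).add_left (hb c)
    have qcomm : ∀ a b : I.ringCon.Quotient, a * b = b * a := by
      intro a b
      obtain ⟨u, rfl⟩ := hFsur a
      exact key u b
    letI : CommRing I.ringCon.Quotient :=
      { (inferInstance : Ring I.ringCon.Quotient) with mul_comm := qcomm }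
    set ψ : MvPolynomial (Fin n ⊕ Fin n) ℂ →+* I.ringCon.Quotient :=
      MvPolynomial.eval₂Hom (mk.comp (algebraMap ℂ (HWeyl n)))
        (fun v => mk (Sum.elim (hx n) (hp n) v)) with hψ
    have key2 : ∀ a : HWeyl n, ψ (π a) = mk a := by
      intro a
      obtain ⟨f, rfl⟩ := RingQuot.mkAlgHom_surjective ℂ (WeylRel n) a
      induction f using FreeAlgebra.induction with
      | grade0 r =>
        rw [AlgHom.commutes, AlgHom.commutes]
        simp [hψ, MvPolynomial.algebraMap_eq]
      | grade1 v =>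
        rcases v with (i | i) | u
        · rw [show RingQuot.mkAlgHom ℂ (WeylRel n) (FreeAlgebra.ι ℂ (Sum.inl (Sum.inl i)))
              = hx n i from rfl, hπx i]
          simp [hψ]
        · rw [show RingQuot.mkAlgHom ℂ (WeylRel n) (FreeAlgebra.ι ℂ (Sum.inl (Sum.inr i)))
              = hp n i from rfl, hπp i]
          simp [hψ]
        · rw [show RingQuot.mkAlgHom ℂ (WeylRel n) (FreeAlgebra.ι ℂ (Sum.inr u))
              = hl n from rfl, hπl, map_zero, hl0]
      | mul a b ha hb => rw [map_mul, map_mul, map_mul, map_mul, ha, hb]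
      | add a b ha hb => rw [map_add, map_add, map_add, map_add, ha, hb]
    have : mk h = 0 := by rw [← key2 h, hh, map_zero]
    exact (hker h).mp this
  · -- easy direction
    intro hh
    have hsub : ({hl n} : Set (HWeyl n)) ⊆ (TwoSidedIdeal.ker π : Set (HWeyl n)) := by
      intro a ha
      rw [Set.mem_singleton_iff] at ha
      subst ha
      exact SetLike.mem_coe.mpr ((TwoSidedIdeal.mem_ker π).mpr hπl)
    exact (TwoSidedIdeal.mem_ker π).mp (TwoSidedIdeal.mem_span_iff.mp hh _ hsub)
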